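/- Let N be a natural number and π : {1,…,N} → ℝ with Σ_{i=1}^N π i = 1. Define Cost(B) = k·Σ_{i=1}^B i·π i + k·B·Σ_{i=B+1}^N π i for B ∈ {0,…,N} and real k. Suppose B₀ and c are natural numbers with B₀ + c ≤ N and there is a real ρ with π i = ρ for all i with B₀ < i ≤ B₀ + c. Let s' = Σ_{i=1}^{B₀+c} π i. Then Cost(B₀ + c) − Cost(B₀) = k·( c·(1 − s') + ρ·(c² + c)/2 ). -/

import Mathlib

lemma block_sums (π : ℕ → ℝ) (ρ : ℝ) (B₀ : ℕ) :
    ∀ c : ℕ, (∀ i : ℕ, B₀ < i → i ≤ B₀ + c → π i = ρ) →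
      (∑ i ∈ Finset.Ioc B₀ (B₀ + c), π i = (c : ℝ) * ρ) ∧
      (∑ i ∈ Finset.Ioc B₀ (B₀ + c), (i : ℝ) * π i
        = ρ * ((c : ℝ) * B₀) + ρ * ((c : ℝ) ^ 2 + c) / 2) := by
  intro c
  induction c with
  | zero => simp
  | succ n ih =>
    intro h
    have hle : B₀ ≤ B₀ + n := Nat.le_add_right _ _
    have h1 : ∀ i : ℕ, B₀ < i → i ≤ B₀ + n → π i = ρ := fun i hi hi' =>
      h i hi (hi'.trans (Nat.le_succ _))
    obtain ⟨e1, e2⟩ := ih h1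
    have htop : π (B₀ + n + 1) = ρ :=
      h _ (Nat.lt_succ_of_le hle) (by omega)
    have hs : B₀ + (n + 1) = (B₀ + n) + 1 := by omega
    rw [hs, Finset.sum_Ioc_succ_top (by omega), Finset.sum_Ioc_succ_top (by omega),
      e1, e2, htop]
    constructor
    · push_cast; ring
    · push_cast; ring

theorem cost_update_rule (N : ℕ) (π : ℕ → ℝ) (k : ℝ)
    (hsum : ∑ i ∈ Finset.Icc 1 N, π i = 1)
    (Cost : ℕ → ℝ)
    (hCost : ∀ B : ℕ, Cost B =
      k * ∑ i ∈ Finset.Icc 1 B, (i : ℝ) * π i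
        + k * (B : ℝ) * ∑ i ∈ Finset.Icc (B + 1) N, π i)
    (B₀ c : ℕ) (hBc : B₀ + c ≤ N) (ρ : ℝ)
    (hρ : ∀ i : ℕ, B₀ < i → i ≤ B₀ + c → π i = ρ) :
    Cost (B₀ + c) - Cost B₀ =
      k * ((c : ℝ) * (1 - ∑ i ∈ Finset.Icc 1 (B₀ + c), π i)
        + ρ * ((c : ℝ) ^ 2 + (c : ℝ)) / 2) := by
  obtain ⟨e1, e2⟩ := block_sums π ρ B₀ c hρ
  have hIcc : ∀ n : ℕ, Finset.Icc 1 n = Finset.Ioc 0 n := by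
    intro n; rw [← Finset.Icc_add_one_left_eq_Ioc]; rfl
  have hIcc' : ∀ m n : ℕ, Finset.Icc (m + 1) n = Finset.Ioc m n := by
    intro m n; rw [← Finset.Icc_add_one_left_eq_Ioc]
  -- split sums
  have split1 : ∀ f : ℕ → ℝ, ∑ i ∈ Finset.Icc 1 (B₀ + c), f i
      = ∑ i ∈ Finset.Icc 1 B₀, f i + ∑ i ∈ Finset.Ioc B₀ (B₀ + c), f i := by
    intro f
    rw [hIcc, hIcc, ← Finset.sum_Ioc_consecutive f (Nat.zero_le B₀) (Nat.le_add_right _ _)]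
  have split2 : ∑ i ∈ Finset.Icc (B₀ + 1) N, π i
      = ∑ i ∈ Finset.Ioc B₀ (B₀ + c), π i + ∑ i ∈ Finset.Icc (B₀ + c + 1) N, π i := by
    rw [hIcc', hIcc', ← Finset.sum_Ioc_consecutive π (Nat.le_add_right _ _) hBc]
  have hsum2 : ∑ i ∈ Finset.Icc 1 (B₀ + c), π i + ∑ i ∈ Finset.Icc (B₀ + c + 1) N, π i = 1 := by
    rw [← hsum, hIcc, hIcc, hIcc']
    exact Finset.sum_Ioc_consecutive π (Nat.zero_le _) hBc
  rw [hCost, hCost, split1 (fun i => (i : ℝ) * π i), split2, e1, e2]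
  have hs : ∑ i ∈ Finset.Icc 1 (B₀ + c), π i
      = ∑ i ∈ Finset.Icc 1 B₀, π i + (c : ℝ) * ρ := by rw [split1 π, e1]
  have htail : ∑ i ∈ Finset.Icc (B₀ + c + 1) N, π i
      = 1 - ∑ i ∈ Finset.Icc 1 (B₀ + c), π i := by linarith
  rw [htail, hs]
  push_cast
  ring
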